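/- In ℝ² the convolution C of the indicator function of the disc of radius R centered at the origin with the centered Gaussian density of covariance σI (σ > 0) is radially symmetric and satisfies C(g) = e^{−‖g‖²/(2σ)} ∑_{m=0}^∞ (‖g‖²/(2σ))^m (1/m!) P(m + 1, R²/(2σ)), where P is the normalized lower incomplete gamma function. -/

import Mathlib

open MeasureTheory Real

/-- The normalized (regularized) lower incomplete gamma function
`P(a, x) = γ(a, x) / Γ(a)`. -/
noncomputable def regIncGamma (a x : ℝ) : ℝ :=
  (∫ t in (0 : ℝ)..x, Real.exp (-t) * t ^ (a - 1)) / Real.Gamma a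

/-- The centered planar Gaussian density with covariance `σ I`. -/
noncomputable def gauss2 (σ : ℝ) (r : EuclideanSpace ℝ (Fin 2)) : ℝ :=
  (2 * π * σ)⁻¹ * Real.exp (-‖r‖ ^ 2 / (2 * σ))

/-- The indicator of the disc of radius `R` centered at the origin of `ℝ²`. -/
noncomputable def disc2 (R : ℝ) (r : EuclideanSpace ℝ (Fin 2)) : ℝ :=
  if ‖r‖ ≤ R then 1 else 0

open intervalIntegral
open scoped ENNReal NNReal

lemma prod_formula (m : ℕ) :
    ∏ i ∈ Finset.range m, (2 * (i:ℝ) + 1) / (2 * i + 2)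
      = (2*m).factorial / (4 ^ m * (m.factorial)^2) := by
  induction m with
  | zero => simp
  | succ k ih =>
    rw [Finset.prod_range_succ, ih]
    have h1 : (k.factorial : ℝ) ≠ 0 := Nat.cast_ne_zero.mpr k.factorial_ne_zero
    have h2 : ((2*k).factorial : ℝ) ≠ 0 := Nat.cast_ne_zero.mpr (2*k).factorial_ne_zero
    have e1 : (2*(k+1)) = (2*k+1) + 1 := by ring
    rw [e1, Nat.factorial_succ, Nat.factorial_succ, Nat.factorial_succ]
    push_cast
    field_simp
    ring


lemma cos_refl (n : ℕ) : (∫ θ in (0:ℝ)..π, Real.cos θ ^ n) =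
    (-1:ℝ)^n * ∫ θ in (0:ℝ)..π, Real.cos θ ^ n := by
  have h := intervalIntegral.integral_comp_sub_left (a := (0:ℝ)) (b := π)
    (fun x => Real.cos x ^ n) π
  simp only [sub_self, sub_zero] at h
  calc (∫ θ in (0:ℝ)..π, Real.cos θ ^ n)
      = ∫ θ in (0:ℝ)..π, Real.cos (π - θ) ^ n := h.symm
    _ = (-1:ℝ)^n * ∫ θ in (0:ℝ)..π, Real.cos θ ^ n := by
        rw [← intervalIntegral.integral_const_mul]
        refine intervalIntegral.integral_congr fun x _ => ?_
        rw [Real.cos_pi_sub]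
        rw [neg_pow]

lemma cos_sym (n : ℕ) : (∫ θ in (-π)..π, Real.cos θ ^ n) =
    2 * ∫ θ in (0:ℝ)..π, Real.cos θ ^ n := by
  have h1 : (∫ θ in (-π)..(0:ℝ), Real.cos θ ^ n) = ∫ θ in (0:ℝ)..π, Real.cos θ ^ n := by
    have h := intervalIntegral.integral_comp_neg (a := (0:ℝ)) (b := π) (fun x => Real.cos x ^ n)
    simp only [Real.cos_neg, neg_zero] at h
    exact h.symm
  have h2 := intervalIntegral.integral_add_adjacent_intervals
    (μ := volume) (a := -π) (b := (0:ℝ)) (c := π)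
    (f := fun θ => Real.cos θ ^ n)
    ((Real.continuous_cos.pow n).intervalIntegrable _ _)
    ((Real.continuous_cos.pow n).intervalIntegrable _ _)
  rw [← h2, h1]; ring

lemma cos_int_odd (m : ℕ) : (∫ θ in (-π)..π, Real.cos θ ^ (2*m+1)) = 0 := by
  have h := cos_refl (2*m+1)
  have : (∫ θ in (0:ℝ)..π, Real.cos θ ^ (2*m+1)) = 0 := by
    have ho : (-1:ℝ)^(2*m+1) = -1 := by
      rw [pow_succ, pow_mul]; norm_num
    rw [ho] at h; linarith
  rw [cos_sym, this]; ring

lemma cos_int_even (m : ℕ) : (∫ θ in (-π)..π, Real.cos θ ^ (2*m)) =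
    2 * π * ((2*m).factorial / (4 ^ m * (m.factorial)^2)) := by
  have key : (∫ θ in (0:ℝ)..π, Real.cos θ ^ (2*m)) = 2 * ∫ x in (0:ℝ)..(π/2), Real.cos x ^ (2*m) := by
    have h1 : (∫ θ in (π/2)..π, Real.cos θ ^ (2*m)) = ∫ x in (0:ℝ)..(π/2), Real.cos x ^ (2*m) := by
      have h := intervalIntegral.integral_comp_sub_left (a := (0:ℝ)) (b := π/2)
        (fun x => Real.cos x ^ (2*m)) π
      have h' : (∫ x in (0:ℝ)..(π/2), Real.cos (π - x) ^ (2*m))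
          = ∫ x in (π - π/2)..(π - 0), Real.cos x ^ (2*m) := h
      rw [show π - π/2 = π/2 by ring, sub_zero] at h'
      rw [← h']
      refine intervalIntegral.integral_congr fun x _ => ?_
      rw [Real.cos_pi_sub, neg_pow]
      have : (-1:ℝ)^(2*m) = 1 := by rw [pow_mul]; norm_num
      rw [this, one_mul]
    have h2 := intervalIntegral.integral_add_adjacent_intervals
      (μ := volume) (a := (0:ℝ)) (b := π/2) (c := π)
      (f := fun θ => Real.cos θ ^ (2*m))
      ((Real.continuous_cos.pow (2*m)).intervalIntegrable _ _)
      ((Real.continuous_cos.pow (2*m)).intervalIntegrable _ _)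
    rw [← h2, h1]; ring
  rw [cos_sym, key, EulerSine.integral_cos_pow_eq, integral_sin_pow_even, prod_formula]
  ring


lemma real_exp_tsum (x : ℝ) : Real.exp x = ∑' n : ℕ, x^n / n.factorial := by
  rw [Real.exp_eq_exp_ℝ, NormedSpace.exp_eq_tsum_div]

lemma summable_sq_fact (x : ℝ) (hx : 0 ≤ x) : Summable (fun m : ℕ => x ^ m / (m.factorial:ℝ)^2) := by
  refine Summable.of_nonneg_of_le (fun m => by positivity) (fun m => ?_)
    (Real.summable_pow_div_factorial x)
  have h1 : (1:ℝ) ≤ (m.factorial:ℝ) := by exact_mod_cast m.factorial_pos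
  have : (m.factorial:ℝ) ≤ (m.factorial:ℝ)^2 := by nlinarith
  apply div_le_div_of_nonneg_left ?_ ?_ this |>.trans_eq rfl
  · positivity
  · exact_mod_cast m.factorial_pos

lemma angular (c : ℝ) :
    (∫ θ in Set.Ioc (-π) π, Real.exp (c * Real.cos θ)) =
      2*π * ∑' m : ℕ, (c^2/4)^m / ((m.factorial:ℝ))^2 := by
  have hmeas : ∀ k : ℕ, AEStronglyMeasurable (fun θ : ℝ => (c * Real.cos θ)^k / k.factorial)
      (volume.restrict (Set.Ioc (-π) π)) := fun k =>
    (((continuous_const.mul Real.continuous_cos).pow k).div_const _).aestronglyMeasurable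
  have hbound : (∑' k : ℕ, ∫⁻ θ in Set.Ioc (-π) π,
      ‖(c * Real.cos θ)^k / k.factorial‖₊) ≠ ⊤ := by
    have hb : ∀ k : ℕ, (∫⁻ θ in Set.Ioc (-π) π, ‖(c * Real.cos θ)^k / k.factorial‖₊)
        ≤ ENNReal.ofReal (|c|^k / k.factorial * (2*π)) := by
      intro k
      have : ∀ θ : ℝ, (‖(c * Real.cos θ)^k / k.factorial‖₊ : ℝ≥0∞)
          ≤ ENNReal.ofReal (|c|^k / k.factorial) := by
        intro θ
        rw [← enorm_eq_nnnorm, Real.enorm_eq_ofReal_abs]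
        apply ENNReal.ofReal_le_ofReal
        calc |(c * Real.cos θ)^k / k.factorial| = |c * Real.cos θ|^k / k.factorial := by
              rw [abs_div, abs_pow, Nat.abs_cast]
          _ ≤ |c|^k / k.factorial := by
              have hb : |c * Real.cos θ| ≤ |c| := by
                rw [abs_mul]
                calc |c| * |Real.cos θ| ≤ |c| * 1 := by
                      gcongr; exact Real.abs_cos_le_one θ
                  _ = |c| := mul_one _
              gcongr
      calc (∫⁻ θ in Set.Ioc (-π) π, ‖(c * Real.cos θ)^k / k.factorial‖₊)
          ≤ ∫⁻ _ in Set.Ioc (-π) π, ENNReal.ofReal (|c|^k / k.factorial) :=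
            lintegral_mono this
        _ = ENNReal.ofReal (|c|^k / k.factorial) * volume (Set.Ioc (-π) π) := by
            rw [setLIntegral_const]
        _ ≤ ENNReal.ofReal (|c|^k / k.factorial) * ENNReal.ofReal (2*π) := by
            gcongr
            rw [Real.volume_Ioc]
            exact ENNReal.ofReal_le_ofReal (by linarith)
        _ = ENNReal.ofReal (|c|^k / k.factorial * (2*π)) :=
            (ENNReal.ofReal_mul (by positivity)).symm
    have hsum : Summable (fun k : ℕ => |c|^k / k.factorial * (2*π)) :=
      (Real.summable_pow_div_factorial |c|).mul_right _
    refine ne_of_lt (lt_of_le_of_lt (ENNReal.tsum_le_tsum hb) ?_)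
    rw [← ENNReal.ofReal_tsum_of_nonneg (fun k => by positivity) hsum]
    exact ENNReal.ofReal_lt_top
  have step1 : (∫ θ in Set.Ioc (-π) π, Real.exp (c * Real.cos θ))
      = ∑' k : ℕ, ∫ θ in Set.Ioc (-π) π, (c * Real.cos θ)^k / k.factorial := by
    rw [← integral_tsum hmeas hbound]
    refine setIntegral_congr_fun measurableSet_Ioc fun θ _ => ?_
    exact real_exp_tsum _
  have hA : ∀ k : ℕ, (∫ θ in Set.Ioc (-π) π, (c * Real.cos θ)^k / k.factorial)
      = c^k / k.factorial * ∫ θ in (-π)..π, Real.cos θ ^ k := by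
    intro k
    rw [intervalIntegral.integral_of_le (by linarith [Real.pi_pos]), ← MeasureTheory.integral_const_mul]
    refine setIntegral_congr_fun measurableSet_Ioc fun θ _ => ?_
    rw [mul_pow]; ring
  rw [step1]
  have hterm : ∀ k : ℕ, (∫ θ in Set.Ioc (-π) π, (c * Real.cos θ)^k / k.factorial)
      = (fun k : ℕ => c^k / k.factorial * ∫ θ in (-π)..π, Real.cos θ ^ k) k := hA
  rw [tsum_congr hterm]
  set f : ℕ → ℝ := fun k => c^k / k.factorial * ∫ θ in (-π)..π, Real.cos θ ^ k with hf
  have hfe : ∀ m : ℕ, f (2*m) = 2*π * ((c^2/4)^m / ((m.factorial:ℝ))^2) := by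
    intro m
    have h2 : ((2*m).factorial : ℝ) ≠ 0 := Nat.cast_ne_zero.mpr (2*m).factorial_ne_zero
    have h1 : ((m.factorial : ℝ)) ≠ 0 := Nat.cast_ne_zero.mpr m.factorial_ne_zero
    simp only [hf, cos_int_even]
    rw [pow_mul]
    field_simp
    rw [← mul_pow]; congr 1; ring
  have hfo : ∀ m : ℕ, f (2*m+1) = 0 := by
    intro m; simp only [hf, cos_int_odd, mul_zero]
  have hse : Summable (fun m : ℕ => f (2*m)) := by
    refine Summable.congr ?_ (fun m => (hfe m).symm)
    exact (summable_sq_fact (c^2/4) (by positivity)).mul_left _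
  have hso : Summable (fun m : ℕ => f (2*m+1)) := by
    refine Summable.congr ?_ (fun m => (hfo m).symm)
    exact summable_zero
  rw [← tsum_even_add_odd hse hso]
  rw [tsum_congr hfo, tsum_zero, add_zero, tsum_congr hfe, tsum_mul_left]

-- lemma: γ(m+1, x) in elementary form
lemma regIncGamma_nat (m : ℕ) (x : ℝ) :
    regIncGamma (m+1) x = (∫ t in (0:ℝ)..x, Real.exp (-t) * t^m) / m.factorial := by
  unfold regIncGamma
  rw [Real.Gamma_nat_eq_factorial]
  congr 1
  refine intervalIntegral.integral_congr fun t _ => ?_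
  have : ((m:ℝ) + 1 - 1) = (m:ℝ) := by ring
  rw [this, Real.rpow_natCast]

-- lemma: substitution for the radial integral
lemma radial_sub (σ R : ℝ) (hσ : 0 < σ) (m : ℕ) :
    (∫ s in (0:ℝ)..R, s * σ⁻¹ * Real.exp (-(s^2/(2*σ))) * (s^2/(2*σ))^m)
      = ∫ t in (0:ℝ)..(R^2/(2*σ)), Real.exp (-t) * t^m := by
  have hderiv : ∀ x ∈ Set.uIcc (0:ℝ) R, HasDerivAt (fun s : ℝ => s^2/(2*σ)) (x/σ) x := by
    intro x _
    have h := (hasDerivAt_pow 2 x).div_const (2*σ)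
    have h2 : ((2:ℕ):ℝ) * x^(2-1) / (2*σ) = x/σ := by
      push_cast; rw [pow_one]; field_simp
    rw [h2] at h
    exact h
  have hcont : ContinuousOn (fun x : ℝ => x/σ) (Set.uIcc (0:ℝ) R) :=
    (continuous_id.div_const σ).continuousOn
  have hg : Continuous (fun t : ℝ => Real.exp (-t) * t^m) := by fun_prop
  have key := intervalIntegral.integral_comp_mul_deriv hderiv hcont hg
  have h0 : (0:ℝ)^2/(2*σ) = 0 := by norm_num
  rw [h0] at key
  rw [← key]
  refine intervalIntegral.integral_congr fun s _ => ?_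
  simp only [Function.comp]
  ring

lemma radial_main (σ R a : ℝ) (hσ : 0 < σ) (hR : 0 < R) (ha : 0 ≤ a) :
    (∫ p in Set.Ioc (0:ℝ) R ×ˢ Set.Ioo (-π) π,
        p.1 * ((2*π*σ)⁻¹ * Real.exp (-(p.1^2 - 2*a*p.1*Real.cos p.2 + a^2) / (2*σ))))
      = Real.exp (-a^2/(2*σ)) * ∑' m : ℕ, (a^2/(2*σ))^m * (1/(m.factorial:ℝ)) *
          regIncGamma (m+1) (R^2/(2*σ)) := by
  have hπ := Real.pi_pos
  set H : ℝ × ℝ → ℝ := fun p =>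
    p.1 * ((2*π*σ)⁻¹ * Real.exp (-(p.1^2 - 2*a*p.1*Real.cos p.2 + a^2) / (2*σ))) with hH
  -- integrability on the product set
  have hSmeas : MeasurableSet (Set.Ioc (0:ℝ) R ×ˢ Set.Ioo (-π) π) :=
    measurableSet_Ioc.prod measurableSet_Ioo
  have hHcont : Continuous H := by fun_prop
  have hvol : volume (Set.Ioc (0:ℝ) R ×ˢ Set.Ioo (-π) π) ≠ ⊤ := by
    rw [MeasureTheory.Measure.volume_eq_prod, MeasureTheory.Measure.prod_prod]
    exact (ENNReal.mul_lt_top measure_Ioc_lt_top measure_Ioo_lt_top).ne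
  have hint : IntegrableOn H (Set.Ioc (0:ℝ) R ×ˢ Set.Ioo (-π) π) volume := by
    apply Measure.integrableOn_of_bounded hvol hHcont.aestronglyMeasurable
    filter_upwards [ae_restrict_mem hSmeas] with p hp
    obtain ⟨hp1, _⟩ := hp
    have hs0 : 0 < p.1 := hp1.1
    have hsR : p.1 ≤ R := hp1.2
    have hexp : p.1^2 - 2*a*p.1*Real.cos p.2 + a^2 ≥ 0 := by
      nlinarith [Real.neg_one_le_cos p.2, Real.cos_le_one p.2, sq_nonneg (p.1 - a),
        sq_nonneg (p.1 + a), mul_nonneg ha hs0.le]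
    have hexple : Real.exp (-(p.1^2 - 2*a*p.1*Real.cos p.2 + a^2) / (2*σ)) ≤ 1 := by
      apply Real.exp_le_one_iff.mpr
      apply div_nonpos_of_nonpos_of_nonneg (by linarith) (by linarith)
    rw [Real.norm_eq_abs, hH]
    have h1 : (0:ℝ) < (2*π*σ)⁻¹ := by positivity
    rw [abs_of_nonneg (by positivity)]
    calc p.1 * ((2*π*σ)⁻¹ * Real.exp (-(p.1^2 - 2*a*p.1*Real.cos p.2 + a^2) / (2*σ)))
        ≤ R * ((2*π*σ)⁻¹ * 1) := by
          apply mul_le_mul hsR ?_ (by positivity) (by linarith)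
          exact mul_le_mul_of_nonneg_left hexple h1.le
      _ = R * (2*π*σ)⁻¹ := by ring
  -- Fubini
  have fub : (∫ p in Set.Ioc (0:ℝ) R ×ˢ Set.Ioo (-π) π, H p)
      = ∫ s in Set.Ioc (0:ℝ) R, ∫ θ in Set.Ioo (-π) π, H (s, θ) := by
    rw [MeasureTheory.Measure.volume_eq_prod] at hint ⊢
    exact MeasureTheory.setIntegral_prod H hint
  rw [fub]
  -- inner angular integral
  have inner : ∀ s : ℝ, (∫ θ in Set.Ioo (-π) π, H (s, θ))
      = (s * (2*π*σ)⁻¹ * Real.exp (-(s^2+a^2)/(2*σ)))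
        * (2*π * ∑' m : ℕ, (((a*s/σ)^2/4)^m/((m.factorial:ℝ))^2)) := by
    intro s
    rw [← MeasureTheory.integral_Ioc_eq_integral_Ioo]
    have hpt : ∀ θ : ℝ, H (s, θ) = (s * (2*π*σ)⁻¹ * Real.exp (-(s^2+a^2)/(2*σ)))
        * Real.exp ((a*s/σ) * Real.cos θ) := by
      intro θ
      rw [hH]
      simp only
      rw [show (-(s^2 - 2*a*s*Real.cos θ + a^2) / (2*σ))
          = (-(s^2+a^2)/(2*σ)) + (a*s/σ)*Real.cos θ by field_simp; ring, Real.exp_add]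
      ring
    simp_rw [hpt]
    rw [MeasureTheory.integral_const_mul, angular]
  simp_rw [inner]
  -- series under the radial integral
  set T : ℕ → ℝ → ℝ := fun m s =>
    (Real.exp (-a^2/(2*σ)) * (a^2/(2*σ))^m * (1/((m.factorial:ℝ))^2))
      * (s * σ⁻¹ * Real.exp (-(s^2/(2*σ))) * (s^2/(2*σ))^m) with hT
  have hTeq : ∀ s : ℝ, (s * (2*π*σ)⁻¹ * Real.exp (-(s^2+a^2)/(2*σ)))
      * (2*π * ∑' m : ℕ, (((a*s/σ)^2/4)^m/((m.factorial:ℝ))^2)) = ∑' m : ℕ, T m s := by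
    intro s
    rw [← tsum_mul_left, ← tsum_mul_left]
    refine tsum_congr fun m => ?_
    have e1 : Real.exp (-(s^2+a^2)/(2*σ)) = Real.exp (-a^2/(2*σ)) * Real.exp (-(s^2/(2*σ))) := by
      rw [← Real.exp_add]; congr 1; ring
    have e2 : ((a*s/σ)^2/4 : ℝ) = (a^2/(2*σ)) * (s^2/(2*σ)) := by
      field_simp; ring
    rw [hT]
    simp only
    rw [e1, e2, mul_pow]
    have hπσ : ((2*π*σ)⁻¹ : ℝ) = (2*π)⁻¹ * σ⁻¹ := by
      rw [mul_inv]
    rw [hπσ]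
    have h2π : (2*π) * (2*π)⁻¹ = 1 := mul_inv_cancel₀ (by positivity)
    field_simp
  simp_rw [hTeq]
  -- interchange sum and radial integral
  have hmeasT : ∀ m : ℕ, AEStronglyMeasurable (T m) (volume.restrict (Set.Ioc 0 R)) := by
    intro m
    apply Continuous.aestronglyMeasurable
    fun_prop
  have hboundT : (∑' m : ℕ, ∫⁻ s in Set.Ioc (0:ℝ) R, ‖T m s‖₊) ≠ ⊤ := by
    set B : ℕ → ℝ := fun m =>
      (a^2/(2*σ))^m * (1/((m.factorial:ℝ))^2) * (R * σ⁻¹ * (R^2/(2*σ))^m) with hB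
    have hb : ∀ m : ℕ, (∫⁻ s in Set.Ioc (0:ℝ) R, ‖T m s‖₊) ≤ ENNReal.ofReal (B m * R) := by
      intro m
      have hpt : ∀ s ∈ Set.Ioc (0:ℝ) R, (‖T m s‖₊ : ℝ≥0∞) ≤ ENNReal.ofReal (B m) := by
        intro s hs
        rw [← enorm_eq_nnnorm, Real.enorm_eq_ofReal_abs]
        apply ENNReal.ofReal_le_ofReal
        have hs0 : 0 < s := hs.1
        have hsR : s ≤ R := hs.2
        have hTnn : 0 ≤ T m s := by rw [hT]; positivity
        rw [abs_of_nonneg hTnn]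
        have hexp1 : Real.exp (-a^2/(2*σ)) ≤ 1 := by
          apply Real.exp_le_one_iff.mpr
          rw [neg_div]
          have : (0:ℝ) ≤ a^2/(2*σ) := by positivity
          linarith
        have hexp2 : Real.exp (-(s^2/(2*σ))) ≤ 1 := by
          apply Real.exp_le_one_iff.mpr
          have : (0:ℝ) ≤ s^2/(2*σ) := by positivity
          linarith
        calc T m s = Real.exp (-a^2/(2*σ)) * Real.exp (-(s^2/(2*σ)))
              * ((a^2/(2*σ))^m * (1/((m.factorial:ℝ))^2) * (s * σ⁻¹ * (s^2/(2*σ))^m)) := by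
              rw [hT]; ring
          _ ≤ 1 * 1 * ((a^2/(2*σ))^m * (1/((m.factorial:ℝ))^2)
              * (R * σ⁻¹ * (R^2/(2*σ))^m)) := by
              gcongr <;> first | positivity | exact hexp1 | exact hexp2 | exact hsR
          _ = B m := by rw [hB]; ring
      calc (∫⁻ s in Set.Ioc (0:ℝ) R, ‖T m s‖₊)
          ≤ ∫⁻ _ in Set.Ioc (0:ℝ) R, ENNReal.ofReal (B m) :=
            setLIntegral_mono (by fun_prop) hpt
        _ = ENNReal.ofReal (B m) * volume (Set.Ioc (0:ℝ) R) := by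
            rw [setLIntegral_const]
        _ ≤ ENNReal.ofReal (B m) * ENNReal.ofReal R := by
            gcongr
            rw [Real.volume_Ioc]
            exact ENNReal.ofReal_le_ofReal (by linarith)
        _ = ENNReal.ofReal (B m * R) := (ENNReal.ofReal_mul (by rw [hB]; positivity)).symm
    have hsum : Summable (fun m : ℕ => B m * R) := by
      refine Summable.congr (((summable_sq_fact (a^2*R^2/(4*σ^2)) (by positivity)).mul_left
        (R^2 * σ⁻¹)) ) (fun m => ?_)
      rw [hB]
      simp only
      rw [show (a^2*R^2/(4*σ^2)) = (a^2/(2*σ)) * (R^2/(2*σ)) by rw [div_mul_div_comm]; congr 1; ring, mul_pow]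
      ring
    refine ne_of_lt (lt_of_le_of_lt (ENNReal.tsum_le_tsum hb) ?_)
    rw [← ENNReal.ofReal_tsum_of_nonneg (fun m => by rw [hB]; positivity) hsum]
    exact ENNReal.ofReal_lt_top
  rw [integral_tsum hmeasT hboundT]
  -- evaluate each radial integral
  have hterm : ∀ m : ℕ, (∫ s in Set.Ioc (0:ℝ) R, T m s)
      = Real.exp (-a^2/(2*σ)) * ((a^2/(2*σ))^m * (1/(m.factorial:ℝ))
          * regIncGamma (m+1) (R^2/(2*σ))) := by
    intro m
    have hfact : ((m.factorial:ℝ)) ≠ 0 := Nat.cast_ne_zero.mpr m.factorial_ne_zero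
    rw [hT]
    simp only
    rw [MeasureTheory.integral_const_mul, ← intervalIntegral.integral_of_le hR.le,
      radial_sub σ R hσ m, regIncGamma_nat]
    field_simp
  rw [tsum_congr hterm, tsum_mul_left]

lemma rot (σ R : ℝ) (g g' : EuclideanSpace ℝ (Fin 2)) (h : ‖g‖ = ‖g'‖) :
    (∫ r, gauss2 σ (r - g) * disc2 R r) = ∫ r, gauss2 σ (r - g') * disc2 R r := by
  set e := Submodule.reflection (ℝ ∙ (g' - g))ᗮ with he
  have heg : e g' = g := Submodule.reflection_sub h.symm
  have hmp : MeasurePreserving e volume volume := e.measurePreserving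
  have hemb : MeasurableEmbedding e := e.toHomeomorph.measurableEmbedding
  have key := hmp.integral_comp hemb (fun r => gauss2 σ (r - g) * disc2 R r)
  rw [← key]
  refine integral_congr_ae (Filter.Eventually.of_forall fun r => ?_)
  simp only
  have h1 : e r - g = e (r - g') := by rw [map_sub, heg]
  rw [h1]
  have hg : gauss2 σ (e (r - g')) = gauss2 σ (r - g') := by
    unfold gauss2; rw [e.norm_map]
  have hd : disc2 R (e r) = disc2 R r := by
    unfold disc2; rw [e.norm_map]
  rw [hg, hd]


lemma norm_sq_two (v : EuclideanSpace ℝ (Fin 2)) : ‖v‖^2 = v 0^2 + v 1^2 := by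
  rw [EuclideanSpace.norm_eq, Real.sq_sqrt (by positivity)]
  simp [Fin.sum_univ_two, sq_abs]

noncomputable def e2 : (ℝ × ℝ) ≃ᵐ EuclideanSpace ℝ (Fin 2) :=
  (MeasurableEquiv.finTwoArrow).symm.trans (MeasurableEquiv.toLp 2 (Fin 2 → ℝ))

lemma e2_apply (p : ℝ × ℝ) : (e2 p) 0 = p.1 ∧ (e2 p) 1 = p.2 := by
  unfold e2
  simp [MeasurableEquiv.finTwoArrow, MeasurableEquiv.toLp]
  exact ⟨rfl, rfl⟩

lemma coord_polar (σ R a : ℝ) (hσ : 0 < σ) (hR : 0 < R) :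
    (∫ r : EuclideanSpace ℝ (Fin 2),
        gauss2 σ (r - a • (EuclideanSpace.single (0 : Fin 2) (1:ℝ))) * disc2 R r)
      = ∫ p in Set.Ioc (0:ℝ) R ×ˢ Set.Ioo (-π) π,
          p.1 * ((2*π*σ)⁻¹ * Real.exp (-(p.1^2 - 2*a*p.1*Real.cos p.2 + a^2) / (2*σ))) := by
  have hmp : MeasurePreserving e2 volume volume :=
    ((EuclideanSpace.volume_preserving_symm_measurableEquiv_toLp (Fin 2)).symm).comp
      ((volume_preserving_finTwoArrow ℝ).symm)
  -- to Cartesian coordinates on ℝ × ℝ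
  have step1 : (∫ r : EuclideanSpace ℝ (Fin 2),
      gauss2 σ (r - a • (EuclideanSpace.single (0 : Fin 2) (1:ℝ))) * disc2 R r)
      = ∫ p : ℝ × ℝ, (2*π*σ)⁻¹ * Real.exp (-((p.1 - a)^2 + p.2^2) / (2*σ))
          * (if p.1^2 + p.2^2 ≤ R^2 then 1 else 0) := by
    rw [← hmp.integral_comp e2.measurableEmbedding]
    refine integral_congr_ae (Filter.Eventually.of_forall fun p => ?_)
    simp only
    have h0 := (e2_apply p).1
    have h1 := (e2_apply p).2
    have hg0 : (a • (EuclideanSpace.single (0 : Fin 2) (1:ℝ))) 0 = a := by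
      simp [EuclideanSpace.single_apply]
    have hg1 : (a • (EuclideanSpace.single (0 : Fin 2) (1:ℝ))) 1 = 0 := by
      simp [EuclideanSpace.single_apply]
    have hns : ‖e2 p - a • (EuclideanSpace.single (0 : Fin 2) (1:ℝ))‖^2
        = (p.1 - a)^2 + p.2^2 := by
      rw [norm_sq_two]
      simp only [PiLp.sub_apply, h0, h1, hg0, hg1, sub_zero]
    have hn : ‖e2 p‖^2 = p.1^2 + p.2^2 := by
      rw [norm_sq_two, h0, h1]
    have hdisc : disc2 R (e2 p) = (if p.1^2 + p.2^2 ≤ R^2 then 1 else 0) := by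
      unfold disc2
      have hiff : (‖e2 p‖ ≤ R) ↔ (p.1^2 + p.2^2 ≤ R^2) := by
        rw [← hn]
        constructor
        · intro hle; nlinarith [norm_nonneg (e2 p)]
        · intro hle; nlinarith [norm_nonneg (e2 p)]
      simp only [hiff]
    unfold gauss2
    rw [hns, hdisc]
  rw [step1]
  -- polar coordinates
  rw [← integral_comp_polarCoord_symm]
  have htarget : MeasurableSet polarCoord.target :=
    measurableSet_Ioi.prod measurableSet_Ioo
  have hSsub : (Set.Ioc (0:ℝ) R ×ˢ Set.Ioo (-π) π) ⊆ polarCoord.target := by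
    rintro ⟨s, θ⟩ ⟨hs, hθ⟩
    exact ⟨hs.1, hθ⟩
  have hpt : ∀ p ∈ polarCoord.target,
      p.1 • ((2*π*σ)⁻¹ * Real.exp (-(((polarCoord.symm p).1 - a)^2 + (polarCoord.symm p).2^2) / (2*σ))
          * (if (polarCoord.symm p).1^2 + (polarCoord.symm p).2^2 ≤ R^2 then 1 else 0))
      = (Set.Ioc (0:ℝ) R ×ˢ Set.Ioo (-π) π).indicator
          (fun p => p.1 * ((2*π*σ)⁻¹
            * Real.exp (-(p.1^2 - 2*a*p.1*Real.cos p.2 + a^2) / (2*σ)))) p := by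
    rintro ⟨s, θ⟩ ⟨hs, hθ⟩
    have hs0 : (0:ℝ) < s := hs
    have hsymm : polarCoord.symm (s, θ) = (s * Real.cos θ, s * Real.sin θ) := rfl
    rw [hsymm]
    simp only [smul_eq_mul]
    have hsq : (s * Real.cos θ)^2 + (s * Real.sin θ)^2 = s^2 :=
      by linear_combination s^2 * Real.sin_sq_add_cos_sq θ
    have hexp : (s * Real.cos θ - a)^2 + (s * Real.sin θ)^2
        = s^2 - 2*a*s*Real.cos θ + a^2 :=
      by linear_combination s^2 * Real.sin_sq_add_cos_sq θ
    rw [hsq, hexp]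
    by_cases hsR : s ≤ R
    · have hmem : ((s, θ) : ℝ × ℝ) ∈ Set.Ioc (0:ℝ) R ×ˢ Set.Ioo (-π) π :=
        ⟨⟨hs0, hsR⟩, hθ⟩
      rw [Set.indicator_of_mem hmem]
      have : s^2 ≤ R^2 := by nlinarith
      rw [if_pos this]
      ring
    · have hmem : ((s, θ) : ℝ × ℝ) ∉ Set.Ioc (0:ℝ) R ×ˢ Set.Ioo (-π) π := by
        intro hmem
        exact hsR hmem.1.2
      rw [Set.indicator_of_notMem hmem]
      have : ¬ (s^2 ≤ R^2) := by
        push_neg at hsR ⊢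
        nlinarith
      rw [if_neg this]
      ring
  rw [setIntegral_congr_fun htarget hpt, setIntegral_indicator
    (measurableSet_Ioc.prod measurableSet_Ioo),
    Set.inter_eq_self_of_subset_right hSsub]

/-- The convolution of the disc indicator with the centered Gaussian is radially
symmetric and is given by the incomplete-gamma series. -/
theorem disc_conv_gaussian (σ R : ℝ) (hσ : 0 < σ) (hR : 0 < R) :
    (∀ g g' : EuclideanSpace ℝ (Fin 2), ‖g‖ = ‖g'‖ →
        (∫ r, gauss2 σ (r - g) * disc2 R r) = ∫ r, gauss2 σ (r - g') * disc2 R r) ∧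
    (∀ g : EuclideanSpace ℝ (Fin 2),
        (∫ r, gauss2 σ (r - g) * disc2 R r) =
          Real.exp (-‖g‖ ^ 2 / (2 * σ)) *
            ∑' m : ℕ, (‖g‖ ^ 2 / (2 * σ)) ^ m * (1 / m.factorial) *
              regIncGamma (m + 1) (R ^ 2 / (2 * σ))) := by
  constructor
  · exact fun g g' h => rot σ R g g' h
  · intro g
    have hg' : ‖((‖g‖ : ℝ) • (EuclideanSpace.single (0 : Fin 2) (1:ℝ)) :
        EuclideanSpace ℝ (Fin 2))‖ = ‖g‖ := by
      rw [norm_smul, EuclideanSpace.norm_single]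
      simp [abs_of_nonneg (norm_nonneg g)]
    rw [rot σ R g ((‖g‖ : ℝ) • EuclideanSpace.single (0 : Fin 2) (1:ℝ)) hg'.symm,
      coord_polar σ R (‖g‖) hσ hR, radial_main σ R (‖g‖) hσ hR (norm_nonneg g)]
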